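/- Let α be irrational with q_{n+1} ≥ 100 q_n and α < p_n/q_n, and let φ(x) = −1 − log(1−x). Then for every a ∈ ℝ and for all sufficiently large such n, the Birkhoff sum φ^{(q_n)} is continuous and strictly increasing on each interval Ī_{n,l} = [l/q_n + 1/(50 q_n), (l+1)/q_n − 1/(50 q_n)], l = 0, …, q_n − 1, its derivative satisfies |(φ^{(q_n)})'(x) − q_n log q_n| < (1/√n) q_n log q_n on Ī_{n,l}, and moreover φ^{(q_n)}(l/q_n + 3/(4 q_n)) ≥ a + 1 and φ^{(q_n)}(l/q_n + 1/(4 q_n)) ≤ a − 1. -/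

import Mathlib

open Set

open Finset Real Set Filter

lemma sum_inv_le (M : ℕ) (hM : 1 ≤ M) :
    ∑ i ∈ Finset.range M, (1:ℝ)/(i+1) ≤ 1 + Real.log M := by
  induction M with
  | zero => omega
  | succ M ih =>
    rcases Nat.eq_or_lt_of_le hM with h1 | h1
    · simp [← h1]
    · have hM1 : 1 ≤ M := by omega
      have hMp : (0:ℝ) < M := by positivity
      rw [Finset.sum_range_succ]
      have key : (1:ℝ)/(M+1) ≤ Real.log ((M:ℝ)+1) - Real.log M := by
        have h := Real.log_le_sub_one_of_pos (x := (M:ℝ)/(M+1)) (by positivity)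
        rw [Real.log_div (by positivity) (by positivity)] at h
        have : (M:ℝ)/(M+1) - 1 = -(1/(M+1)) := by field_simp; ring
        rw [this] at h
        linarith
      have := ih hM1
      push_cast
      linarith

lemma log_le_sum_inv (M : ℕ) :
    Real.log (M+1) ≤ ∑ i ∈ Finset.range M, (1:ℝ)/(i+1) := by
  induction M with
  | zero => simp
  | succ M ih =>
    rw [Finset.sum_range_succ]
    have key : Real.log ((M:ℝ)+2) - Real.log ((M:ℝ)+1) ≤ (1:ℝ)/(M+1) := by
      have h := Real.log_le_sub_one_of_pos (x := ((M:ℝ)+2)/(M+1)) (by positivity)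
      rw [Real.log_div (by positivity) (by positivity)] at h
      have : ((M:ℝ)+2)/(M+1) - 1 = 1/(M+1) := by field_simp; norm_num
      rw [this] at h
      linarith
    have h3 : Real.log ((M:ℕ) + 1 + 1) = Real.log ((M:ℝ) + 2) := by congr 1; ring
    push_cast at ih h3 ⊢
    rw [h3]
    linarith



lemma log_factorial (M : ℕ) :
    Real.log (Nat.factorial M) = ∑ i ∈ Finset.range M, Real.log ((i:ℝ)+1) := by
  induction M with
  | zero => simp
  | succ M ih =>
    rw [Finset.sum_range_succ, ← ih, Nat.factorial_succ]
    push_cast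
    rw [Real.log_mul (by positivity) (by positivity)]
    ring

lemma stirling_ge (m : ℕ) : Real.sqrt π ≤ Stirling.stirlingSeq (m + 1) := by
  have h1 : Filter.Tendsto (fun n => Stirling.stirlingSeq (n + 1)) atTop (nhds (Real.sqrt π)) :=
    Stirling.tendsto_stirlingSeq_sqrt_pi.comp (Filter.tendsto_add_atTop_nat 1)
  exact Stirling.stirlingSeq'_antitone.le_of_tendsto h1 m

lemma stirling_le (m : ℕ) : Stirling.stirlingSeq (m + 1) ≤ Real.exp 1 / Real.sqrt 2 := by
  have := Stirling.stirlingSeq'_antitone (Nat.zero_le m)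
  simpa [Stirling.stirlingSeq_one] using this

lemma factorial_stirling_lower (M : ℕ) (h : 1 ≤ M) :
    (M:ℝ) * Real.log M - M + Real.log M / 2 ≤ Real.log (Nat.factorial M) := by
  obtain ⟨m, hm⟩ : ∃ m, M = m + 1 := ⟨M - 1, by omega⟩
  set q : ℕ := M with hqdef
  have hq : (0:ℝ) < q := by simp [hqdef]; omega
  have h1 : Real.sqrt π ≤ Stirling.stirlingSeq q := hm ▸ stirling_ge m
  have hπ : (1:ℝ) ≤ Real.sqrt π := by
    rw [show (1:ℝ) = Real.sqrt 1 by simp]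
    exact Real.sqrt_le_sqrt (by linarith [Real.pi_gt_three])
  have hden : (0:ℝ) < Real.sqrt (2 * q) * ((q:ℝ) / Real.exp 1) ^ q := by positivity
  have h2 : Real.sqrt (2 * q) * ((q:ℝ) / Real.exp 1) ^ q ≤ (Nat.factorial q : ℝ) := by
    have h1' := (le_div_iff₀ hden).mp (le_trans hπ h1)
    linarith [h1']
  have h3 : Real.sqrt ((q:ℝ)) * ((q:ℝ) / Real.exp 1) ^ q ≤ Real.sqrt (2*q) * ((q:ℝ) / Real.exp 1) ^ q := by
    have : Real.sqrt ((q:ℝ)) ≤ Real.sqrt (2*q) := Real.sqrt_le_sqrt (by linarith)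
    have hp : (0:ℝ) ≤ ((q:ℝ) / Real.exp 1) ^ q := by positivity
    nlinarith
  have h4 : Real.sqrt ((q:ℝ)) * ((q:ℝ) / Real.exp 1) ^ q ≤ (Nat.factorial q : ℝ) := le_trans h3 h2
  have h5 := Real.log_le_log (by positivity) h4
  rw [Real.log_mul (by positivity) (by positivity), Real.log_pow,
    Real.log_div (by positivity) (Real.exp_ne_zero 1), Real.log_exp,
    Real.log_sqrt (le_of_lt hq)] at h5
  linarith

lemma factorial_stirling_upper (M : ℕ) (h : 1 ≤ M) :
    Real.log (Nat.factorial M) ≤ (M:ℝ) * Real.log M - M + Real.log M / 2 + 1 := by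
  obtain ⟨m, hm⟩ : ∃ m, M = m + 1 := ⟨M - 1, by omega⟩
  set q : ℕ := M with hqdef
  have hq : (0:ℝ) < q := by simp [hqdef]; omega
  have h1 : Stirling.stirlingSeq q ≤ Real.exp 1 / Real.sqrt 2 := hm ▸ stirling_le m
  have hden : (0:ℝ) < Real.sqrt (2 * q) * ((q:ℝ) / Real.exp 1) ^ q := by positivity
  have h2 : (Nat.factorial q : ℝ) ≤ Real.exp 1 / Real.sqrt 2 * (Real.sqrt (2 * q) * ((q:ℝ) / Real.exp 1) ^ q) := by
    unfold Stirling.stirlingSeq at h1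
    calc (Nat.factorial q : ℝ)
        = (Nat.factorial q : ℝ) / (Real.sqrt (2 * q) * ((q:ℝ) / Real.exp 1) ^ q) * (Real.sqrt (2 * q) * ((q:ℝ) / Real.exp 1) ^ q) := by
          field_simp
      _ ≤ Real.exp 1 / Real.sqrt 2 * (Real.sqrt (2 * q) * ((q:ℝ) / Real.exp 1) ^ q) := by
          apply mul_le_mul_of_nonneg_right h1 (le_of_lt hden)
  have heq : Real.exp 1 / Real.sqrt 2 * (Real.sqrt (2 * q) * ((q:ℝ) / Real.exp 1) ^ q)
      = Real.exp 1 * Real.sqrt q * ((q:ℝ) / Real.exp 1) ^ q := by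
    rw [show (2:ℝ) * q = 2 * q by ring, Real.sqrt_mul (by norm_num : (0:ℝ) ≤ 2)]
    have h2' : Real.sqrt 2 ≠ 0 := by positivity
    field_simp
  rw [heq] at h2
  have h5 := Real.log_le_log (by positivity) h2
  rw [Real.log_mul (by positivity) (by positivity),
    Real.log_mul (Real.exp_ne_zero 1) (by positivity), Real.log_pow,
    Real.log_div (by positivity) (Real.exp_ne_zero 1), Real.log_exp,
    Real.log_sqrt (le_of_lt hq)] at h5
  linarith

lemma fib_lower (n : ℕ) : (3/2:ℝ)^n ≤ Nat.fib (n+2) := by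
  induction n using Nat.strong_induction_on with
  | _ n ih =>
    match n with
    | 0 => norm_num
    | 1 => rw [show Nat.fib 3 = 2 from rfl]; norm_num
    | (n+2) =>
      have h1 := ih n (by omega)
      have h2 := ih (n+1) (by omega)
      have : Nat.fib (n+4) = Nat.fib (n+2) + Nat.fib (n+3) := by
        rw [show n+4 = (n+2)+2 by ring, Nat.fib_add_two]
      rw [this]
      push_cast
      have hp : (0:ℝ) < (3/2:ℝ)^n := by positivity
      calc (3/2:ℝ)^(n+2) = (3/2)^n * (9/4) := by ring
        _ ≤ (3/2)^n + (3/2)^(n+1) := by ring_nf; nlinarith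
        _ ≤ (Nat.fib (n+2) : ℝ) + (Nat.fib (n+3) : ℝ) := by gcongr

lemma log_three_half : (1/3:ℝ) ≤ Real.log (3/2) := by
  have h := Real.log_le_sub_one_of_pos (x := (2/3:ℝ)) (by norm_num)
  have : Real.log (2/3:ℝ) = - Real.log (3/2) := by
    rw [show (2/3:ℝ) = (3/2)⁻¹ by norm_num, Real.log_inv]
  rw [this] at h
  linarith

section core
variable (α : ℝ) (q : ℕ) (p : ℤ) (l : ℕ) (δ : ℝ)

set_option maxHeartbeats 1000000 in
lemma core_main (hq2 : 2 ≤ q) (hcop : IsCoprime p (q:ℤ)) (hl : l < q)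
    (hδ0 : 0 < δ) (hδ1 : δ ≤ 1/(100*(q:ℝ)^2)) (hα : α = p/(q:ℝ) - δ)
    (nr a : ℝ) (hnr : 0 < nr)
    (hlog1 : 51 * nr < Real.log q)
    (hloga : 6*(|a|+2) ≤ Real.log q) :
    StrictMonoOn
        (fun x : ℝ => ∑ j ∈ Finset.range q,
          (-1 - Real.log (1 - Int.fract (x + j * α))))
        (Icc ((l : ℝ) / q + 1 / (50 * q)) (((l : ℝ) + 1) / q - 1 / (50 * q))) ∧
    ContinuousOn
        (fun x : ℝ => ∑ j ∈ Finset.range q,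
          (-1 - Real.log (1 - Int.fract (x + j * α))))
        (Icc ((l : ℝ) / q + 1 / (50 * q)) (((l : ℝ) + 1) / q - 1 / (50 * q))) ∧
    (∀ x ∈ Icc ((l : ℝ) / q + 1 / (50 * q)) (((l : ℝ) + 1) / q - 1 / (50 * q)),
        ∃ d : ℝ,
          HasDerivAt
            (fun x : ℝ => ∑ j ∈ Finset.range q,
              (-1 - Real.log (1 - Int.fract (x + j * α)))) d x ∧
          |d - q * Real.log q| < (1 / nr) * q * Real.log q) ∧
    (∑ j ∈ Finset.range q,
        (-1 - Real.log (1 - Int.fract ((l : ℝ) / q + 3 / (4 * q) + j * α)))) ≥ a + 1 ∧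
    (∑ j ∈ Finset.range q,
        (-1 - Real.log (1 - Int.fract ((l : ℝ) / q + 1 / (4 * q) + j * α)))) ≤ a - 1 := by
  have hq0 : q ≠ 0 := by omega
  have hQ0 : (0:ℝ) < q := by positivity
  have hQ2 : (2:ℝ) ≤ q := by exact_mod_cast hq2
  have hlogQ : 0 < Real.log q := Real.log_pos (by linarith)
  -- the residues
  set k : ℕ → ℕ := fun j => ((l + j * p) % (q:ℤ)).toNat with hk
  have hkcast : ∀ j, ((k j : ℤ)) = (l + j * p) % (q:ℤ) := by
    intro j
    simp only [hk]
    exact Int.toNat_of_nonneg (Int.emod_nonneg _ (by exact_mod_cast hq0))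
  have hklt : ∀ j, k j < q := by
    intro j
    have h1 : (l + j * p) % (q:ℤ) < (q:ℤ) :=
      Int.emod_lt_of_pos _ (by exact_mod_cast Nat.pos_of_ne_zero hq0)
    have := hkcast j
    omega
  have hkR : ∀ j, (k j : ℝ) ≤ (q:ℝ) - 1 := by
    intro j
    have := hklt j
    have : (k j : ℝ) ≤ (q:ℝ) - 1 := by
      have h2 : (k j : ℕ) + 1 ≤ q := this
      have := Nat.cast_le (α := ℝ) |>.mpr h2
      push_cast at this
      linarith
    exact this
  -- j δ bounds
  have hjd : ∀ j < q, 0 ≤ (j:ℝ)*δ ∧ (j:ℝ)*δ < 1/(100*(q:ℝ)) := by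
    intro j hj
    constructor
    · positivity
    · have hjR : (j:ℝ) ≤ (q:ℝ) - 1 := by
        have h2 : (j : ℕ) + 1 ≤ q := hj
        have := Nat.cast_le (α := ℝ) |>.mpr h2
        push_cast at this
        linarith
      have h3 : (j:ℝ)*δ ≤ ((q:ℝ)-1) * (1/(100*(q:ℝ)^2)) := by
        apply mul_le_mul hjR hδ1 (le_of_lt hδ0) (by linarith)
      have h4 : ((q:ℝ)-1) * (1/(100*(q:ℝ)^2)) = 1/(100*(q:ℝ)) - 1/(100*(q:ℝ)^2) := by
        field_simp
      have h5 : (0:ℝ) < 1/(100*(q:ℝ)^2) := by positivity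
      linarith
  -- the representation of the fractional part on the open interval J
  set J : Set ℝ := Ioo ((l:ℝ)/q + 1/(100*q)) (((l:ℝ)+1)/q - 1/(100*q)) with hJdef
  have hJopen : IsOpen J := isOpen_Ioo
  have hfract : ∀ x ∈ J, ∀ j < q,
      Int.fract (x + j*α) = (x - l/q) + (k j)/(q:ℝ) - j*δ := by
    intro x hx j hj
    obtain ⟨hx1, hx2⟩ := hx
    set d : ℤ := (l + j * p) / (q:ℤ) with hd
    have hdiv : ((l:ℤ) + j * p) = (q:ℤ) * d + (k j : ℤ) := by
      rw [hkcast j, hd]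
      exact (Int.mul_ediv_add_emod _ _).symm
    have hrep : (j:ℝ) * ((p:ℝ)/q) = (d:ℝ) + (k j)/(q:ℝ) - (l:ℝ)/q := by
      have : ((l:ℝ) + j * p) = (q:ℝ) * d + (k j : ℝ) := by exact_mod_cast hdiv
      field_simp
      nlinarith [this]
    have key : x + j*α = (d:ℝ) + ((x - l/q) + (k j)/(q:ℝ) - j*δ) := by
      rw [hα]
      have : (j:ℝ) * ((p:ℝ)/q - δ) = (j:ℝ) * ((p:ℝ)/q) - j*δ := by ring
      rw [this, hrep]
      ring
    rw [key, Int.fract_intCast_add]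
    apply Int.fract_eq_self.mpr
    have hjd' := hjd j hj
    have hkj := hkR j
    have hsplit : ((l:ℝ)+1)/q = (l:ℝ)/q + 1/q := by ring
    have hkq : (k j : ℝ)/q ≤ ((q:ℝ)-1)/q := by gcongr
    have hq1 : ((q:ℝ)-1)/q = 1 - 1/q := by field_simp
    have hkq0 : (0:ℝ) ≤ (k j : ℝ)/q := by positivity
    have hpos : (0:ℝ) < 1/(100*(q:ℝ)) := by positivity
    constructor
    · linarith [hjd'.2, hx1]
    · rw [hsplit] at hx2
      linarith [hjd'.1, hx2]
  -- the shifted singularity locations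
  set c : ℕ → ℝ := fun j => 1 + (l:ℝ)/q - (k j)/q + (j:ℝ)*δ with hc
  set G : ℝ → ℝ := fun x => ∑ j ∈ Finset.range q, (-1 - Real.log (c j - x)) with hG
  have hFG : ∀ x ∈ J, ∑ j ∈ Finset.range q, (-1 - Real.log (1 - Int.fract (x + j * α))) = G x := by
    intro x hx
    apply Finset.sum_congr rfl
    intro j hj
    rw [hfract x hx j (Finset.mem_range.mp hj)]
    have : (1:ℝ) - (x - (l:ℝ)/q + (k j)/q - (j:ℝ)*δ) = c j - x := by
      simp only [hc]; ring
    rw [this]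
  have h50100 : (1:ℝ)/(50*(q:ℝ)) = 2 * (1/(100*(q:ℝ))) := by ring
  have hpos100 : (0:ℝ) < 1/(100*(q:ℝ)) := by positivity
  have hIccJ : Icc ((l:ℝ)/q + 1/(50*q)) (((l:ℝ)+1)/q - 1/(50*q)) ⊆ J := by
    intro x hx
    obtain ⟨h1, h2⟩ := hx
    exact ⟨by linarith, by linarith⟩
  have hbounds : ∀ x ∈ Icc ((l:ℝ)/q + 1/(50*q)) (((l:ℝ)+1)/q - 1/(50*q)), ∀ j < q,
      1/(50*(q:ℝ)) ≤ c j - x ∧ c j - x ≤ ((q:ℝ) - k j)/q ∧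
      ((q:ℝ) - k j - 1 + 1/50)/q ≤ c j - x := by
    intro x hx j hj
    obtain ⟨hx1, hx2⟩ := hx
    have hjd' := hjd j hj
    have hkj := hkR j
    have e1 : ((q:ℝ) - k j)/q = 1 - (k j : ℝ)/q := by field_simp
    have e2 : ((q:ℝ) - k j - 1 + 1/50)/q = 1 - (k j:ℝ)/q - 1/q + 1/(50*q) := by
      field_simp
    have e3 : ((l:ℝ)+1)/q = (l:ℝ)/q + 1/q := by ring
    have hkq : (k j : ℝ)/q ≤ ((q:ℝ)-1)/q := by gcongr
    have e4 : ((q:ℝ)-1)/q = 1 - 1/q := by field_simp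
    rw [e3] at hx2
    refine ⟨by simp only [hc]; linarith, by simp only [hc]; linarith,
      by simp only [hc]; linarith⟩
  -- reindexing
  have hinj : ∀ x ∈ Finset.range q, ∀ y ∈ Finset.range q, k x = k y → x = y := by
    intro j1 hj1 j2 hj2 hkeq
    rw [Finset.mem_range] at hj1 hj2
    have h1 : ((l:ℤ) + j1 * p) % q = ((l:ℤ) + j2 * p) % q := by
      rw [← hkcast j1, ← hkcast j2, hkeq]
    have h2 : (q:ℤ) ∣ ((j1:ℤ) - j2) * p := by
      have h3 := Int.emod_emod_of_dvd
      have h4 : (((l:ℤ) + j1 * p) - ((l:ℤ) + j2 * p)) % q = 0 :=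
        (Int.emod_eq_emod_iff_emod_sub_eq_zero).mp h1
      have h5 : ((l:ℤ) + j1 * p) - ((l:ℤ) + j2 * p) = ((j1:ℤ) - j2) * p := by ring
      rw [h5] at h4
      exact Int.dvd_of_emod_eq_zero h4
    have h6 : (q:ℤ) ∣ ((j1:ℤ) - j2) := (hcop.symm).dvd_of_dvd_mul_right h2
    have h7 : ((j1:ℤ) - j2) = 0 := by
      refine Int.eq_zero_of_abs_lt_dvd h6 ?_
      rw [abs_lt]
      constructor <;> [push_cast; push_cast] <;> omega
    omega
  have himg : (Finset.range q).image k = Finset.range q := by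
    apply Finset.eq_of_subset_of_card_le
    · intro m hm
      obtain ⟨j, _, rfl⟩ := Finset.mem_image.mp hm
      exact Finset.mem_range.mpr (hklt j)
    · rw [Finset.card_image_of_injOn (fun x hx y hy h => hinj x hx y hy h)]
  have hre : ∀ f : ℕ → ℝ, ∑ j ∈ Finset.range q, f (k j) = ∑ m ∈ Finset.range q, f m := by
    intro f
    rw [← Finset.sum_image hinj, himg]
  have hre2 : ∀ f : ℕ → ℝ,
      ∑ j ∈ Finset.range q, f (k j) = ∑ m ∈ Finset.range q, f (q - 1 - m) :=
    fun f => (hre f).trans (Finset.sum_range_reflect f q).symm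
  -- cast helper
  have hcastn : ∀ m, m < q → ((q - 1 - m : ℕ) : ℝ) = (q:ℝ) - 1 - m := by
    intro m hm
    have e : (q - 1 - m : ℕ) = q - (1 + m) := by omega
    rw [e, Nat.cast_sub (by omega)]
    push_cast; ring
  refine ⟨?_, ?_, ?_, ?_, ?_⟩
  · -- StrictMonoOn
    intro x hx y hy hxy
    show (∑ j ∈ Finset.range q, (-1 - Real.log (1 - Int.fract (x + j * α)))) <
      ∑ j ∈ Finset.range q, (-1 - Real.log (1 - Int.fract (y + j * α)))
    rw [hFG x (hIccJ hx), hFG y (hIccJ hy)]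
    simp only [hG]
    apply Finset.sum_lt_sum_of_nonempty (Finset.nonempty_range_iff.mpr hq0)
    intro j hj
    have hj' := Finset.mem_range.mp hj
    have hby := hbounds y hy j hj'
    have h1 : 0 < c j - y := lt_of_lt_of_le (by positivity) hby.1
    have h2 : c j - y < c j - x := by linarith
    have := Real.log_lt_log h1 h2
    linarith
  · -- ContinuousOn
    apply ContinuousOn.congr (f := G)
    · simp only [hG]
      apply continuousOn_finset_sum
      intro j hj
      apply ContinuousOn.sub continuousOn_const
      apply ContinuousOn.log
      · exact (continuous_const.sub continuous_id).continuousOn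
      · intro x hx
        exact ne_of_gt (lt_of_lt_of_le (by positivity)
          (hbounds x hx j (Finset.mem_range.mp hj)).1)
    · intro x hx
      exact hFG x (hIccJ hx)
  · -- derivative
    intro x hx
    refine ⟨∑ j ∈ Finset.range q, 1/(c j - x), ?_, ?_⟩
    · have hGd : HasDerivAt G (∑ j ∈ Finset.range q, 1/(c j - x)) x := by
        simp only [hG]
        apply HasDerivAt.fun_sum
        intro j hj
        have hd1 : HasDerivAt (fun y : ℝ => c j - y) (-1) x := by
          simpa using (hasDerivAt_id x).const_sub (c j)
        have hne : c j - x ≠ 0 := ne_of_gt (lt_of_lt_of_le (by positivity)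
          (hbounds x hx j (Finset.mem_range.mp hj)).1)
        have hd2 := hd1.log hne
        have hd3 := hd2.const_sub (-1)
        convert hd3 using 1
        field_simp
      apply hGd.congr_of_eventuallyEq
      exact Filter.eventuallyEq_of_mem (hJopen.mem_nhds (hIccJ hx)) (fun y hy => hFG y hy)
    · -- the estimate
      have hlow1 : ∀ j ∈ Finset.range q, (q:ℝ)/((q:ℝ) - k j) ≤ 1/(c j - x) := by
        intro j hj
        have hb := hbounds x hx j (Finset.mem_range.mp hj)
        have h0 : 0 < c j - x := lt_of_lt_of_le (by positivity) hb.1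
        have := one_div_le_one_div_of_le h0 hb.2.1
        rwa [one_div_div] at this
      have hsum1 : ∑ j ∈ Finset.range q, (q:ℝ)/((q:ℝ) - k j)
          = ∑ m ∈ Finset.range q, (q:ℝ)/((m:ℝ) + 1) := by
        have h := hre2 (fun m : ℕ => (q:ℝ)/((q:ℝ) - (m:ℝ)))
        rw [h]
        apply Finset.sum_congr rfl
        intro m hm
        rw [hcastn m (Finset.mem_range.mp hm)]
        congr 1
        ring
      have hlow : (q:ℝ) * Real.log ((q:ℝ)+1) ≤ ∑ j ∈ Finset.range q, 1/(c j - x) := by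
        have h1 := Finset.sum_le_sum hlow1
        have h2 : ∑ m ∈ Finset.range q, (q:ℝ)/((m:ℝ) + 1)
            = (q:ℝ) * ∑ m ∈ Finset.range q, (1:ℝ)/((m:ℝ) + 1) := by
          rw [Finset.mul_sum]
          apply Finset.sum_congr rfl
          intro m hm
          ring
        have h3 := log_le_sum_inv q
        have h4 : (q:ℝ) * Real.log ((q:ℝ)+1) ≤ (q:ℝ) * ∑ m ∈ Finset.range q, (1:ℝ)/((m:ℝ)+1) := by
          apply mul_le_mul_of_nonneg_left h3 (le_of_lt hQ0)
        rw [← h2] at h4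
        rw [hsum1] at h1
        linarith
      have hup1 : ∀ j ∈ Finset.range q, 1/(c j - x) ≤ (q:ℝ)/((q:ℝ) - k j - 1 + 1/50) := by
        intro j hj
        have hb := hbounds x hx j (Finset.mem_range.mp hj)
        have hkj := hkR j
        have h0 : (0:ℝ) < ((q:ℝ) - k j - 1 + 1/50)/q := by
          apply div_pos (by linarith) hQ0
        have := one_div_le_one_div_of_le h0 hb.2.2
        rwa [one_div_div] at this
      have hsum2 : ∑ j ∈ Finset.range q, (q:ℝ)/((q:ℝ) - k j - 1 + 1/50)
          = ∑ m ∈ Finset.range q, (q:ℝ)/((m:ℝ) + 1/50) := by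
        have h := hre2 (fun m : ℕ => (q:ℝ)/((q:ℝ) - (m:ℝ) - 1 + 1/50))
        rw [h]
        apply Finset.sum_congr rfl
        intro m hm
        rw [hcastn m (Finset.mem_range.mp hm)]
        congr 1
        ring
      have hhar : ∑ m ∈ Finset.range q, (1:ℝ)/((m:ℝ) + 1/50) ≤ 51 + Real.log q := by
        have e : q = (q-1)+1 := by omega
        have h0 : ∑ m ∈ Finset.range q, (1:ℝ)/((m:ℝ) + 1/50)
            = ∑ m ∈ Finset.range ((q-1)+1), (1:ℝ)/((m:ℝ) + 1/50) := by rw [← e]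
        rw [h0, Finset.sum_range_succ']
        have h1 : ∀ i ∈ Finset.range (q-1), (1:ℝ)/((i:ℝ)+1+1/50) ≤ 1/((i:ℝ)+1) := by
          intro i hi
          apply one_div_le_one_div_of_le (by positivity) (by linarith)
        have h2 : ∑ i ∈ Finset.range (q-1), ((1:ℝ)/((i+1:ℕ) + 1/50))
            ≤ ∑ i ∈ Finset.range (q-1), (1:ℝ)/((i:ℝ)+1) := by
          apply Finset.sum_le_sum
          intro i hi
          push_cast
          exact h1 i hi
        have h3 := sum_inv_le (q-1) (by omega)
        have h4 : Real.log ((q-1:ℕ):ℝ) ≤ Real.log q := by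
          apply Real.log_le_log (by exact_mod_cast Nat.sub_pos_of_lt (by omega))
          exact_mod_cast Nat.sub_le q 1
        have h5 : ((0:ℕ):ℝ) + 1/50 = 1/50 := by norm_num
        rw [h5]
        have h6 : (1:ℝ)/(1/50) = 50 := by norm_num
        rw [h6]
        linarith
      have hup : ∑ j ∈ Finset.range q, 1/(c j - x) ≤ 51*(q:ℝ) + (q:ℝ) * Real.log q := by
        have h1 := Finset.sum_le_sum hup1
        rw [hsum2] at h1
        have h2 : ∑ m ∈ Finset.range q, (q:ℝ)/((m:ℝ) + 1/50)
            = (q:ℝ) * ∑ m ∈ Finset.range q, (1:ℝ)/((m:ℝ) + 1/50) := by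
          rw [Finset.mul_sum]
          apply Finset.sum_congr rfl
          intro m hm
          ring
        rw [h2] at h1
        have h3 : (q:ℝ) * ∑ m ∈ Finset.range q, (1:ℝ)/((m:ℝ) + 1/50)
            ≤ (q:ℝ) * (51 + Real.log q) := by
          apply mul_le_mul_of_nonneg_left hhar (le_of_lt hQ0)
        have h4 : (q:ℝ) * (51 + Real.log q) = 51*(q:ℝ) + (q:ℝ) * Real.log q := by ring
        linarith
      rw [abs_sub_lt_iff]
      have hnr' : nr ≠ 0 := ne_of_gt hnr
      constructor
      · have h51 : 51 * (q:ℝ) < 1/nr * q * Real.log q := by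
          have hm := mul_lt_mul_of_pos_right hlog1 (show (0:ℝ) < (q:ℝ)/nr by positivity)
          have e1 : 51 * nr * ((q:ℝ)/nr) = 51 * q := by field_simp
          have e2 : Real.log q * ((q:ℝ)/nr) = 1/nr * q * Real.log q := by
            field_simp
          rw [e1, e2] at hm
          exact hm
        linarith [hup, h51]
      · have hrhs : 0 < (1/nr) * q * Real.log q := by positivity
        have hml : Real.log (q:ℝ) ≤ Real.log ((q:ℝ)+1) := by
          apply Real.log_le_log hQ0 (by linarith)
        have hml2 : (q:ℝ) * Real.log (q:ℝ) ≤ (q:ℝ) * Real.log ((q:ℝ)+1) :=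
          mul_le_mul_of_nonneg_left hml (le_of_lt hQ0)
        linarith [hlow]
  · -- value at 3/4
    set x := (l:ℝ)/q + 3/(4*(q:ℝ)) with hxdef
    have hxJ : x ∈ J := by
      constructor
      · have e : x - ((l:ℝ)/q + 1/(100*q)) = 74/(100*(q:ℝ)) := by rw [hxdef]; ring
        have : (0:ℝ) < 74/(100*(q:ℝ)) := by positivity
        linarith
      · have e : (((l:ℝ)+1)/q - 1/(100*q)) - x = 24/(100*(q:ℝ)) := by rw [hxdef]; ring
        have : (0:ℝ) < 24/(100*(q:ℝ)) := by positivity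
        linarith
    rw [hFG x hxJ]
    have hGx : G x = ∑ j ∈ Finset.range q, (-1 - Real.log (c j - x)) := by simp only [hG]
    have hterm : ∀ j ∈ Finset.range q,
        (-1 - Real.log (((q:ℝ) - k j - 74/100)/q)) ≤ -1 - Real.log (c j - x) := by
      intro j hj
      have hj' := Finset.mem_range.mp hj
      have hkj := hkR j
      have hjd' := hjd j hj'
      have e : c j - x = ((q:ℝ) - k j - 3/4)/q + (j:ℝ)*δ := by
        simp only [hc, hxdef]
        field_simp
        ring
      have h1 : 0 < c j - x := by
        rw [e]
        have : (0:ℝ) < ((q:ℝ) - k j - 3/4)/q := by apply div_pos (by linarith) hQ0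
        linarith [hjd'.1]
      have h2 : c j - x ≤ ((q:ℝ) - k j - 74/100)/q := by
        rw [e]
        have e2 : ((q:ℝ) - k j - 74/100)/q = ((q:ℝ) - k j - 3/4)/q + 1/(100*(q:ℝ)) := by
          ring
        rw [e2]
        linarith [hjd'.2]
      have := Real.log_le_log h1 h2
      linarith
    have hstep1 : ∑ j ∈ Finset.range q, (-1 - Real.log (((q:ℝ) - k j - 74/100)/q)) ≤ G x := by
      rw [hGx]
      exact Finset.sum_le_sum hterm
    have hstep2 : ∑ j ∈ Finset.range q, (-1 - Real.log (((q:ℝ) - k j - 74/100)/q))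
        = ∑ m ∈ Finset.range q, (-1 - Real.log (((m:ℝ) + 26/100)/q)) := by
      have h := hre2 (fun m : ℕ => -1 - Real.log (((q:ℝ) - (m:ℝ) - 74/100)/q))
      rw [h]
      apply Finset.sum_congr rfl
      intro m hm
      rw [hcastn m (Finset.mem_range.mp hm)]
      have e : ((q:ℝ) - ((q:ℝ)-1-(m:ℝ)) - 74/100)/q = ((m:ℝ) + 26/100)/q := by ring
      rw [e]
    have hstep3 : ∑ m ∈ Finset.range q, (-1 - Real.log (((m:ℝ) + 26/100)/q))
        = -(q:ℝ) + q * Real.log q - ∑ m ∈ Finset.range q, Real.log ((m:ℝ) + 26/100) := by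
      have h1 : ∀ m ∈ Finset.range q, (-1 - Real.log (((m:ℝ) + 26/100)/q))
          = (-1 + Real.log q) - Real.log ((m:ℝ) + 26/100) := by
        intro m hm
        rw [Real.log_div (by positivity) (ne_of_gt hQ0)]
        ring
      rw [Finset.sum_congr rfl h1, Finset.sum_sub_distrib, Finset.sum_const,
        Finset.card_range, nsmul_eq_mul]
      ring
    have hstep4 : ∑ m ∈ Finset.range q, Real.log ((m:ℝ) + 26/100)
        ≤ Real.log (Nat.factorial q) - (74/100) * Real.log q := by
      have h1 : ∀ m ∈ Finset.range q, Real.log ((m:ℝ) + 26/100)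
          ≤ Real.log ((m:ℝ) + 1) - (74/100) * (1/((m:ℝ)+1)) := by
        intro m hm
        have hp1 : (0:ℝ) < (m:ℝ) + 26/100 := by positivity
        have hp2 : (0:ℝ) < (m:ℝ) + 1 := by positivity
        have h2 := Real.log_le_sub_one_of_pos
          (show (0:ℝ) < ((m:ℝ)+26/100)/((m:ℝ)+1) by positivity)
        rw [Real.log_div (ne_of_gt hp1) (ne_of_gt hp2)] at h2
        have e : ((m:ℝ)+26/100)/((m:ℝ)+1) - 1 = -((74/100) * (1/((m:ℝ)+1))) := by
          field_simp
          ring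
        rw [e] at h2
        linarith
      have h3 := Finset.sum_le_sum h1
      rw [Finset.sum_sub_distrib] at h3
      have h4 : ∑ m ∈ Finset.range q, Real.log ((m:ℝ)+1) = Real.log (Nat.factorial q) :=
        (log_factorial q).symm
      have h5 : ∑ m ∈ Finset.range q, (74/100) * (1/((m:ℝ)+1))
          = (74/100) * ∑ m ∈ Finset.range q, (1:ℝ)/((m:ℝ)+1) := by
        rw [Finset.mul_sum]
      have h6 := log_le_sum_inv q
      have h7 : Real.log (q:ℝ) ≤ Real.log ((q:ℝ)+1) := Real.log_le_log hQ0 (by linarith)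
      rw [h4, h5] at h3
      linarith
    have hfac := factorial_stirling_upper q (by omega)
    have habs := le_abs_self a
    have habs2 := abs_nonneg a
    rw [ge_iff_le]
    linarith [hstep1, hstep2, hstep3, hstep4, hfac, hloga]
  · -- value at 1/4
    set x := (l:ℝ)/q + 1/(4*(q:ℝ)) with hxdef
    have hxJ : x ∈ J := by
      constructor
      · have e : x - ((l:ℝ)/q + 1/(100*q)) = 24/(100*(q:ℝ)) := by rw [hxdef]; ring
        have : (0:ℝ) < 24/(100*(q:ℝ)) := by positivity
        linarith
      · have e : (((l:ℝ)+1)/q - 1/(100*q)) - x = 74/(100*(q:ℝ)) := by rw [hxdef]; ring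
        have : (0:ℝ) < 74/(100*(q:ℝ)) := by positivity
        linarith
    rw [hFG x hxJ]
    have hGx : G x = ∑ j ∈ Finset.range q, (-1 - Real.log (c j - x)) := by simp only [hG]
    have hterm : ∀ j ∈ Finset.range q,
        -1 - Real.log (c j - x) ≤ (-1 - Real.log (((q:ℝ) - k j - 1/4)/q)) := by
      intro j hj
      have hj' := Finset.mem_range.mp hj
      have hkj := hkR j
      have hjd' := hjd j hj'
      have e : c j - x = ((q:ℝ) - k j - 1/4)/q + (j:ℝ)*δ := by
        simp only [hc, hxdef]
        field_simp
        ring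
      have h0 : (0:ℝ) < ((q:ℝ) - k j - 1/4)/q := by apply div_pos (by linarith) hQ0
      have h2 : ((q:ℝ) - k j - 1/4)/q ≤ c j - x := by
        rw [e]
        linarith [hjd'.1]
      have := Real.log_le_log h0 h2
      linarith
    have hstep1 : G x ≤ ∑ j ∈ Finset.range q, (-1 - Real.log (((q:ℝ) - k j - 1/4)/q)) := by
      rw [hGx]
      exact Finset.sum_le_sum hterm
    have hstep2 : ∑ j ∈ Finset.range q, (-1 - Real.log (((q:ℝ) - k j - 1/4)/q))
        = ∑ m ∈ Finset.range q, (-1 - Real.log (((m:ℝ) + 3/4)/q)) := by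
      have h := hre2 (fun m : ℕ => -1 - Real.log (((q:ℝ) - (m:ℝ) - 1/4)/q))
      rw [h]
      apply Finset.sum_congr rfl
      intro m hm
      rw [hcastn m (Finset.mem_range.mp hm)]
      have e : ((q:ℝ) - ((q:ℝ)-1-(m:ℝ)) - 1/4)/q = ((m:ℝ) + 3/4)/q := by ring
      rw [e]
    have hstep3 : ∑ m ∈ Finset.range q, (-1 - Real.log (((m:ℝ) + 3/4)/q))
        = -(q:ℝ) + q * Real.log q - ∑ m ∈ Finset.range q, Real.log ((m:ℝ) + 3/4) := by
      have h1 : ∀ m ∈ Finset.range q, (-1 - Real.log (((m:ℝ) + 3/4)/q))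
          = (-1 + Real.log q) - Real.log ((m:ℝ) + 3/4) := by
        intro m hm
        rw [Real.log_div (by positivity) (ne_of_gt hQ0)]
        ring
      rw [Finset.sum_congr rfl h1, Finset.sum_sub_distrib, Finset.sum_const,
        Finset.card_range, nsmul_eq_mul]
      ring
    have hstep4 : Real.log (Nat.factorial q) - (1/3) * (1 + Real.log q)
        ≤ ∑ m ∈ Finset.range q, Real.log ((m:ℝ) + 3/4) := by
      have h1 : ∀ m ∈ Finset.range q,
          Real.log ((m:ℝ) + 1) - (1/3) * (1/((m:ℝ)+1)) ≤ Real.log ((m:ℝ) + 3/4) := by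
        intro m hm
        have hp1 : (0:ℝ) < (m:ℝ) + 3/4 := by positivity
        have hp2 : (0:ℝ) < (m:ℝ) + 1 := by positivity
        have h2 := Real.log_le_sub_one_of_pos
          (show (0:ℝ) < ((m:ℝ)+1)/((m:ℝ)+3/4) by positivity)
        rw [Real.log_div (ne_of_gt hp2) (ne_of_gt hp1)] at h2
        have e : ((m:ℝ)+1)/((m:ℝ)+3/4) - 1 = (1/4)/((m:ℝ)+3/4) := by
          field_simp
          ring
        have h3 : (1/4)/((m:ℝ)+3/4) ≤ (1/3) * (1/((m:ℝ)+1)) := by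
          have e2 : (1:ℝ)/3 * (1/((m:ℝ)+1)) = (1/3)/((m:ℝ)+1) := by ring
          rw [e2, div_le_div_iff₀ hp1 hp2]
          nlinarith
        rw [e] at h2
        linarith
      have h3 := Finset.sum_le_sum h1
      rw [Finset.sum_sub_distrib] at h3
      have h4 : ∑ m ∈ Finset.range q, Real.log ((m:ℝ)+1) = Real.log (Nat.factorial q) :=
        (log_factorial q).symm
      have h5 : ∑ m ∈ Finset.range q, (1/3) * (1/((m:ℝ)+1))
          = (1/3) * ∑ m ∈ Finset.range q, (1:ℝ)/((m:ℝ)+1) := by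
        rw [Finset.mul_sum]
      have h6 := sum_inv_le q (by omega)
      rw [h4, h5] at h3
      linarith
    have hfac := factorial_stirling_lower q (by omega)
    have habs := neg_abs_le a
    have habs2 := abs_nonneg a
    linarith [hstep1, hstep2, hstep3, hstep4, hfac, hloga]
end core


/-- Lemma 1 of the paper: let `α` be irrational with convergents `pₙ/qₙ` and let
`φ(x) = −1 − log(1−x)` on `[0,1)` (extended `1`-periodically). For every `a ∈ ℝ` and all
sufficiently large `n` with `n ∈ H(α)` (i.e. `q_{n+1} ≥ 100 qₙ` and `α < pₙ/qₙ`), the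
Birkhoff sum `φ^{(qₙ)}` is continuous and strictly increasing on each interval
`Ī_{n,l} = [l/qₙ + 1/(50qₙ), (l+1)/qₙ − 1/(50qₙ)]`, its derivative satisfies
`|(φ^{(qₙ)})'(x) − qₙ log qₙ| < (1/√n) qₙ log qₙ` there, and
`φ^{(qₙ)}(l/qₙ + 3/(4qₙ)) ≥ a + 1`, `φ^{(qₙ)}(l/qₙ + 1/(4qₙ)) ≤ a − 1`. -/
theorem stmt15 (α : ℝ) (hα : α ∈ Set.Ioo (0 : ℝ) 1) (hirr : Irrational α)
    (qd : ℕ → ℕ) (hqd : ∀ n, (qd n : ℝ) = (GenContFract.of α).dens n) (a : ℝ) :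
    ∃ N : ℕ, ∀ n ≥ N,
      ((qd (n + 1) : ℝ) ≥ 100 * qd n ∧
          α < (GenContFract.of α).nums n / (GenContFract.of α).dens n) →
      ∀ l : ℕ, l < qd n →
        StrictMonoOn
            (fun x : ℝ => ∑ j ∈ Finset.range (qd n),
              (-1 - Real.log (1 - Int.fract (x + j * α))))
            (Icc ((l : ℝ) / qd n + 1 / (50 * qd n)) (((l : ℝ) + 1) / qd n - 1 / (50 * qd n))) ∧
        ContinuousOn
            (fun x : ℝ => ∑ j ∈ Finset.range (qd n),
              (-1 - Real.log (1 - Int.fract (x + j * α))))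
            (Icc ((l : ℝ) / qd n + 1 / (50 * qd n)) (((l : ℝ) + 1) / qd n - 1 / (50 * qd n))) ∧
        (∀ x ∈ Icc ((l : ℝ) / qd n + 1 / (50 * qd n))
              (((l : ℝ) + 1) / qd n - 1 / (50 * qd n)),
            ∃ d : ℝ,
              HasDerivAt
                (fun x : ℝ => ∑ j ∈ Finset.range (qd n),
                  (-1 - Real.log (1 - Int.fract (x + j * α)))) d x ∧
              |d - qd n * Real.log (qd n)| < (1 / Real.sqrt n) * qd n * Real.log (qd n)) ∧
        (∑ j ∈ Finset.range (qd n),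
            (-1 - Real.log (1 - Int.fract ((l : ℝ) / qd n + 3 / (4 * qd n) + j * α)))) ≥
          a + 1 ∧
        (∑ j ∈ Finset.range (qd n),
            (-1 - Real.log (1 - Int.fract ((l : ℝ) / qd n + 1 / (4 * qd n) + j * α)))) ≤
          a - 1 := by
  have hnt : ∀ m, ¬(GenContFract.of α).TerminatedAt m := by
    intro m hm
    have hterm : (GenContFract.of α).Terminates := ⟨m, hm⟩
    obtain ⟨qq, hqq⟩ := (GenContFract.terminates_iff_rat α).mp hterm
    exact hirr ⟨qq, hqq.symm⟩
  have hnums : ∀ m, ∃ P : ℤ, (GenContFract.of α).nums m = (P:ℝ) := by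
    intro m
    induction m using Nat.strong_induction_on with
    | _ m ih =>
      match m with
      | 0 => exact ⟨⌊α⌋, by rw [GenContFract.zeroth_num_eq_h, GenContFract.of_h_eq_floor]⟩
      | 1 =>
        obtain ⟨gp, hgp⟩ := Option.ne_none_iff_exists'.mp (hnt 0)
        obtain ⟨ha1, z, hb⟩ := GenContFract.of_partNum_eq_one_and_exists_int_partDen_eq hgp
        refine ⟨z * ⌊α⌋ + 1, ?_⟩
        rw [GenContFract.first_num_eq hgp, GenContFract.of_h_eq_floor, ha1, hb]
        push_cast
        ring
      | (m+2) =>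
        obtain ⟨P0, h0⟩ := ih m (by omega)
        obtain ⟨P1, h1⟩ := ih (m+1) (by omega)
        obtain ⟨gp, hgp⟩ := Option.ne_none_iff_exists'.mp (hnt (m+1))
        obtain ⟨ha1, z, hb⟩ := GenContFract.of_partNum_eq_one_and_exists_int_partDen_eq hgp
        refine ⟨z * P1 + P0, ?_⟩
        rw [GenContFract.nums_recurrence hgp h0 h1, ha1, hb]
        push_cast
        ring
  refine ⟨max 25600 (⌈18 * (|a| + 2)⌉₊ + 1), ?_⟩
  intro n hn hyp l hl
  obtain ⟨hq100, hαlt⟩ := hyp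
  have hn1 : 25600 ≤ n := le_trans (le_max_left _ _) hn
  have hn2 : (⌈18 * (|a| + 2)⌉₊ + 1 : ℕ) ≤ n := le_trans (le_max_right _ _) hn
  have hnR : (25600:ℝ) ≤ n := by exact_mod_cast hn1
  obtain ⟨P, hP⟩ := hnums n
  obtain ⟨P', hP'⟩ := hnums (n+1)
  have hfib : ((Nat.fib (n+1) : ℝ)) ≤ (GenContFract.of α).dens n :=
    GenContFract.succ_nth_fib_le_of_nth_den (Or.inr (hnt (n-1)))
  have hfibR : ((3/2:ℝ))^(n-1) ≤ (qd n : ℝ) := by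
    rw [hqd n]
    refine le_trans ?_ hfib
    have e : (n-1)+2 = n+1 := by omega
    have h2 := fib_lower (n-1)
    rw [e] at h2
    exact h2
  have hQge : (2:ℝ) ≤ (qd n : ℝ) := by
    have h1 : ((3/2:ℝ))^2 ≤ (3/2:ℝ)^(n-1) :=
      pow_le_pow_right₀ (by norm_num) (by omega)
    have h2 : (2:ℝ) ≤ (3/2:ℝ)^2 := by norm_num
    linarith
  have hq2 : 2 ≤ qd n := by exact_mod_cast hQge
  have hQ0 : (0:ℝ) < qd n := by linarith
  have hlogq : ((n:ℝ)-1)/3 ≤ Real.log (qd n) := by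
    have h1 : Real.log ((3/2:ℝ)^(n-1)) ≤ Real.log (qd n) :=
      Real.log_le_log (by positivity) hfibR
    rw [Real.log_pow] at h1
    have h2 := log_three_half
    have h3 : ((n-1:ℕ):ℝ) = (n:ℝ) - 1 := by
      rw [Nat.cast_sub (by omega)]; norm_num
    rw [h3] at h1
    have h4 : (0:ℝ) ≤ (n:ℝ) - 1 := by linarith
    nlinarith
  have hlog1 : 51 * Real.sqrt n < Real.log (qd n) := by
    have hsq : Real.sqrt n ≤ (n:ℝ)/160 := by
      have h1 : (n:ℝ) ≤ ((n:ℝ)/160)^2 := by nlinarith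
      have h2 := Real.sqrt_le_sqrt h1
      rwa [Real.sqrt_sq (by positivity)] at h2
    have h5 : 51 * ((n:ℝ)/160) < ((n:ℝ)-1)/3 := by linarith
    linarith
  have hloga : 6*(|a|+2) ≤ Real.log (qd n) := by
    have hce : (18*(|a|+2) : ℝ) ≤ (⌈18 * (|a| + 2)⌉₊ : ℝ) := Nat.le_ceil _
    have hnn : ((⌈18 * (|a| + 2)⌉₊ + 1 : ℕ) : ℝ) ≤ n := by exact_mod_cast hn2
    push_cast at hnn
    have h6 : 6*(|a|+2) ≤ ((n:ℝ)-1)/3 := by linarith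
    linarith
  have hdet : (GenContFract.of α).nums n * (GenContFract.of α).dens (n+1) -
      (GenContFract.of α).dens n * (GenContFract.of α).nums (n+1) = (-1)^(n+1) :=
    SimpContFract.determinant (s := SimpContFract.of α) (hnt n)
  rw [hP, hP', ← hqd n, ← hqd (n+1)] at hdet
  have hdetZ : P * (qd (n+1):ℤ) - (qd n : ℤ) * P' = (-1)^(n+1) := by exact_mod_cast hdet
  have hcop : IsCoprime P ((qd n : ℤ)) := by
    rcases Nat.even_or_odd (n+1) with he | ho
    · have hpow : ((-1:ℤ))^(n+1) = 1 := Even.neg_one_pow he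
      rw [hpow] at hdetZ
      exact ⟨(qd (n+1):ℤ), -P', by linear_combination hdetZ⟩
    · have hpow : ((-1:ℤ))^(n+1) = -1 := Odd.neg_one_pow ho
      rw [hpow] at hdetZ
      exact ⟨-(qd (n+1):ℤ), P', by linear_combination -hdetZ⟩
  have habs := GenContFract.abs_sub_convs_le (v := α) (n := n) (hnt n)
  rw [GenContFract.conv_eq_num_div_den, hP, ← hqd n, ← hqd (n+1)] at habs
  have hαP : α < (P:ℝ)/(qd n) := by rwa [hP, ← hqd n] at hαlt
  have hδ0 : 0 < (P:ℝ)/(qd n) - α := by linarith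
  have hδ1 : (P:ℝ)/(qd n) - α ≤ 1/(100*(qd n:ℝ)^2) := by
    have h1 : (P:ℝ)/(qd n) - α ≤ 1/((qd n:ℝ) * (qd (n+1):ℝ)) := by
      have h2 := abs_le.mp habs
      linarith [h2.1]
    have h2 : (100:ℝ)*(qd n:ℝ)^2 ≤ (qd n:ℝ) * (qd (n+1):ℝ) := by nlinarith
    have h3 : 1/((qd n:ℝ)*(qd (n+1):ℝ)) ≤ 1/(100*(qd n:ℝ)^2) :=
      one_div_le_one_div_of_le (by positivity) h2
    linarith
  have hαeq : α = (P:ℝ)/(qd n) - ((P:ℝ)/(qd n) - α) := by ring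
  have hnr : 0 < Real.sqrt n := Real.sqrt_pos.mpr (by linarith)
  exact core_main α (qd n) P l ((P:ℝ)/(qd n) - α) hq2 hcop hl hδ0 hδ1 hαeq
    (Real.sqrt n) a hnr hlog1 hloga
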